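/- For every ζ ∈ ℂ not equal to any of the four points e^{iπ/4}, e^{3iπ/4}, e^{5iπ/4}, e^{7iπ/4}, the following algebraic identity holds: [(1−i)/(ζ−e^{iπ/4}) + (1+i)/(ζ−e^{3iπ/4}) + (−1+i)/(ζ−e^{5iπ/4}) + (−1−i)/(ζ−e^{7iπ/4})] · [(1+i)/(ζ−e^{iπ/4}) + (1−i)/(ζ−e^{3iπ/4}) + (−1−i)/(ζ−e^{5iπ/4}) + (−1+i)/(ζ−e^{7iπ/4})] = 2·[1/(ζ−e^{iπ/4}) − 1/(ζ−e^{3iπ/4}) + 1/(ζ−e^{5iπ/4}) − 1/(ζ−e^{7iπ/4})]². -/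

import Mathlib

open Complex

set_option maxHeartbeats 1000000 in
lemma aztec_aux (ζ w : ℂ)
    (h1 : ζ - w ≠ 0) (h2 : ζ - I*w ≠ 0) (h3 : ζ + w ≠ 0) (h4 : ζ + I*w ≠ 0) :
    ((1 - I) * (ζ - w)⁻¹ + (1 + I) * (ζ - I*w)⁻¹
        + (-1 + I) * (ζ + w)⁻¹ + (-1 - I) * (ζ + I*w)⁻¹)
      * ((1 + I) * (ζ - w)⁻¹ + (1 - I) * (ζ - I*w)⁻¹
        + (-1 - I) * (ζ + w)⁻¹ + (-1 + I) * (ζ + I*w)⁻¹)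
    = 2 * ((ζ - w)⁻¹ - (ζ - I*w)⁻¹ + (ζ + w)⁻¹ - (ζ + I*w)⁻¹) ^ 2 := by
  have hP : (ζ - w) * (ζ - I*w) * (ζ + w) * (ζ + I*w) ≠ 0 :=
    mul_ne_zero (mul_ne_zero (mul_ne_zero h1 h2) h3) h4
  field_simp
  linear_combination (-8*ζ^2*w^4 + 4*ζ^4*w^2 - 8*ζ^2*w^4*I^1 + 8*ζ^4*w^2*I^1 + 4*w^6*I^2 + 8*ζ^2*w^4*I^2 - 4*ζ^4*w^2*I^2 + 8*w^6*I^3 - 8*ζ^2*w^4*I^3 - 4*w^6*I^4) * Complex.I_sq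

lemma aztec_exp3 : Complex.exp ((3 * Real.pi / 4 : ℝ) * I)
    = I * Complex.exp ((Real.pi / 4 : ℝ) * I) := by
  rw [show ((3*Real.pi/4:ℝ):ℂ)*I = (Real.pi/2:ℝ)*I + (Real.pi/4:ℝ)*I by push_cast; ring,
    Complex.exp_add, Complex.exp_mul_I]
  simp

lemma aztec_exp5 : Complex.exp ((5 * Real.pi / 4 : ℝ) * I)
    = - Complex.exp ((Real.pi / 4 : ℝ) * I) := by
  rw [show ((5*Real.pi/4:ℝ):ℂ)*I = (Real.pi:ℝ)*I + (Real.pi/4:ℝ)*I by push_cast; ring,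
    Complex.exp_add, Complex.exp_pi_mul_I]
  ring

lemma aztec_exp7 : Complex.exp ((7 * Real.pi / 4 : ℝ) * I)
    = -(I * Complex.exp ((Real.pi / 4 : ℝ) * I)) := by
  rw [show ((7*Real.pi/4:ℝ):ℂ)*I = (Real.pi:ℝ)*I + (3*Real.pi/4:ℝ)*I by push_cast; ring,
    Complex.exp_add, Complex.exp_pi_mul_I, aztec_exp3]
  ring

/-- The algebraic identity expressing the conformality relation
`∂_ζ z · ∂_ζ z̄ = (∂_ζ ϑ)²` for the Lorentz-minimal surface of the Aztec diamond,
where the four points `e^{iπ/4}, e^{3iπ/4}, e^{5iπ/4}, e^{7iπ/4}` are the fourth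
roots of `−1`. -/
theorem aztec_conformality_identity (ζ : ℂ)
    (h1 : ζ ≠ Complex.exp ((Real.pi / 4 : ℝ) * I))
    (h2 : ζ ≠ Complex.exp ((3 * Real.pi / 4 : ℝ) * I))
    (h3 : ζ ≠ Complex.exp ((5 * Real.pi / 4 : ℝ) * I))
    (h4 : ζ ≠ Complex.exp ((7 * Real.pi / 4 : ℝ) * I)) :
    ((1 - I) * (ζ - Complex.exp ((Real.pi / 4 : ℝ) * I))⁻¹
        + (1 + I) * (ζ - Complex.exp ((3 * Real.pi / 4 : ℝ) * I))⁻¹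
        + (-1 + I) * (ζ - Complex.exp ((5 * Real.pi / 4 : ℝ) * I))⁻¹
        + (-1 - I) * (ζ - Complex.exp ((7 * Real.pi / 4 : ℝ) * I))⁻¹)
      * ((1 + I) * (ζ - Complex.exp ((Real.pi / 4 : ℝ) * I))⁻¹
        + (1 - I) * (ζ - Complex.exp ((3 * Real.pi / 4 : ℝ) * I))⁻¹
        + (-1 - I) * (ζ - Complex.exp ((5 * Real.pi / 4 : ℝ) * I))⁻¹
        + (-1 + I) * (ζ - Complex.exp ((7 * Real.pi / 4 : ℝ) * I))⁻¹)
    = 2 * ((ζ - Complex.exp ((Real.pi / 4 : ℝ) * I))⁻¹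
        - (ζ - Complex.exp ((3 * Real.pi / 4 : ℝ) * I))⁻¹
        + (ζ - Complex.exp ((5 * Real.pi / 4 : ℝ) * I))⁻¹
        - (ζ - Complex.exp ((7 * Real.pi / 4 : ℝ) * I))⁻¹) ^ 2 := by
  rw [aztec_exp3] at h2 ⊢
  rw [aztec_exp5] at h3 ⊢
  rw [aztec_exp7] at h4 ⊢
  have e1 := sub_ne_zero.mpr h1
  have e2 := sub_ne_zero.mpr h2
  have e3 : ζ + Complex.exp ((Real.pi / 4 : ℝ) * I) ≠ 0 := by
    intro h; exact h3 (by linear_combination h)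
  have e4 : ζ + I * Complex.exp ((Real.pi / 4 : ℝ) * I) ≠ 0 := by
    intro h; exact h4 (by linear_combination h)
  have := aztec_aux ζ (Complex.exp ((Real.pi / 4 : ℝ) * I)) e1 e2 e3 e4
  linear_combination this
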